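/- For every integer d ≥ 1, the families F_{GP_d} and F_{SGP_d} coincide. Equivalently (since every special generalized polynomial of degree ≤ d is a generalized polynomial of degree ≤ d): for every k ∈ ℕ, all generalized polynomials P_1,…,P_k ∈ GP_d and all ε_1,…,ε_k > 0, there exist m ∈ ℕ, special generalized polynomials Q_1,…,Q_m ∈ SGP_d and δ_1,…,δ_m > 0 such that ⋂_{j=1}^m {n ∈ ℤ : ‖Q_j(n)‖ < δ_j} ⊆ ⋂_{i=1}^k {n ∈ ℤ : ‖P_i(n)‖ < ε_i}. -/

import Mathlib

open scoped Classical
open MeasureTheory Filter Topology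

noncomputable section

/-- Integer iterate of a bijection `T` of a set: `zIter T n = T^n`. -/
def zIter {X : Type*} (T : Equiv.Perm X) (n : ℤ) : X → X := ⇑(T ^ n)

/-- Integer iterate of a homeomorphism. -/
def hIter {X : Type*} [TopologicalSpace X] (T : X ≃ₜ X) (n : ℤ) : X → X :=
  zIter T.toEquiv n

/-- The integer nearest to `a`, with ties broken towards the smaller integer.
This is the `⌈·⌉` of the paper. -/
def nearInt (a : ℝ) : ℤ := if a - (⌊a⌋ : ℝ) ≤ 1/2 then ⌊a⌋ else ⌈a⌉

/-- The distance from `a` to the nearest integer, i.e. `‖a‖` in the paper. -/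
def distInt (a : ℝ) : ℝ := |a - (nearInt a : ℝ)|

/-- Generalized polynomials of degree at most `d` (for `d ≥ 1`):
`GP 1` is the smallest collection of functions `ℤ → ℝ` containing `n ↦ a n`
and closed under taking the nearest integer, scalar multiplication and finite sums;
`GP d` moreover contains every `GP e` for `e < d` and all functions
`n ↦ a₀ n^{p₀} ⌈f₁(n)⌉ ⋯ ⌈f k (n)⌉` with `f l ∈ GP (p l)` and `p₀ + ∑ p l = d`. -/
inductive GP : ℕ → (ℤ → ℝ) → Prop
  | lin (a : ℝ) : GP 1 (fun n => a * n)
  | mono {d : ℕ} (hd : 1 ≤ d) (a₀ : ℝ) (p₀ : ℕ) {k : ℕ} (p : Fin k → ℕ)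
      (f : Fin k → ℤ → ℝ) (hf : ∀ l, GP (p l) (f l)) (hsum : p₀ + ∑ l, p l = d) :
      GP d (fun n => a₀ * (n : ℝ) ^ p₀ * ∏ l, (nearInt (f l n) : ℝ))
  | incl {d e : ℕ} (hed : e < d) {f : ℤ → ℝ} (hf : GP e f) : GP d f
  | ceil {d : ℕ} {f : ℤ → ℝ} (hf : GP d f) : GP d (fun n => (nearInt (f n) : ℝ))
  | smul {d : ℕ} (c : ℝ) {f : ℤ → ℝ} (hf : GP d f) : GP d (fun n => c * f n)
  | add {d : ℕ} {f g : ℤ → ℝ} (hf : GP d f) (hg : GP d g) : GP d (fun n => f n + g n)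

/-- The bracket expression `L(a₁, …, a_ℓ) = a₁⌈L(a₂, …, a_ℓ)⌉`, `L(a) = a`. -/
def Lfun : List ℝ → ℝ
  | [] => 0
  | [a] => a
  | a :: b :: rest => a * (nearInt (Lfun (b :: rest)) : ℝ)

/-- Special generalized polynomials of degree at most `d`:
the functions `n ↦ L(n^{j₁} a₁, …, n^{j_ℓ} a_ℓ)` with `1 ≤ ℓ`, `j t ≥ 1`, `∑ j t ≤ d`. -/
def SGP (d : ℕ) (g : ℤ → ℝ) : Prop :=
  ∃ ℓ : ℕ, 1 ≤ ℓ ∧ ∃ (a : Fin ℓ → ℝ) (j : Fin ℓ → ℕ),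
    (∀ t, 1 ≤ j t) ∧ (∑ t, j t) ≤ d ∧
    g = fun n : ℤ => Lfun (List.ofFn fun t => (n : ℝ) ^ (j t) * a t)

/-- `FS({n i}) = {n_{i₁} + ⋯ + n_{i_k} : i₁ < ⋯ < i_k}`, the set of finite sums. -/
def FS {d : ℕ} (n : Fin d → ℤ) : Set ℤ :=
  { m | ∃ I : Finset (Fin d), I.Nonempty ∧ m = ∑ i ∈ I, n i }

/-- `SG d P`: sums `p_{i₁} + ⋯ + p_{i_k}` over strictly increasing finite index
sequences whose consecutive gaps are at most `d` (infinite sequence `P`). -/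
def SG (d : ℕ) (P : ℕ → ℤ) : Set ℤ :=
  { n | ∃ k : ℕ, ∃ i : Fin (k + 1) → ℕ, StrictMono i ∧
      (∀ t : Fin k, i t.succ - i t.castSucc ≤ d) ∧ n = ∑ t, P (i t) }

/-- `SGfin d P` : the same for a finite sequence `P` of length `m`. -/
def SGfin (d : ℕ) {m : ℕ} (P : Fin m → ℤ) : Set ℤ :=
  { n | ∃ k : ℕ, ∃ i : Fin (k + 1) → Fin m, StrictMono i ∧
      (∀ t : Fin k, (i t.succ : ℕ) - (i t.castSucc : ℕ) ≤ d) ∧ n = ∑ t, P (i t) }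

/-- A set of integers is syndetic if it has bounded gaps. -/
def Syndetic (A : Set ℤ) : Prop :=
  ∃ N : ℕ, ∀ i : ℤ, ∃ j, i ≤ j ∧ j ≤ i + N ∧ j ∈ A

/-- `F` has positive upper Banach density. -/
def PosUpperBanachDensity (F : Set ℤ) : Prop :=
  ∃ δ : ℝ, 0 < δ ∧ ∀ N : ℕ, ∃ (a : ℤ) (L : ℕ), N ≤ L ∧ 1 ≤ L ∧
    δ * L ≤ ((Finset.Icc a (a + L - 1)).filter (fun x => x ∈ F)).card

/-- A set `A ⊆ ℤ` contains finite IP-sets of arbitrarily long lengths. -/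
def ContainsArbLongFIP (A : Set ℤ) : Prop :=
  ∀ k : ℕ, 1 ≤ k → ∃ p : Fin k → ℤ, FS p ⊆ A

/-- A topological dynamical system `(X, T)` is minimal: every orbit is dense. -/
def MinimalTDS {X : Type*} [TopologicalSpace X] (T : X ≃ₜ X) : Prop :=
  ∀ x : X, Dense (Set.range fun n : ℤ => hIter T n x)

/-- `Nset T x U = N(x, U) = {n ∈ ℤ : Tⁿ x ∈ U}`. -/
def Nset {X : Type*} [TopologicalSpace X] (T : X ≃ₜ X) (x : X) (U : Set X) : Set ℤ :=
  { n : ℤ | hIter T n x ∈ U }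

/-- The regionally proximal relation of order `d`. -/
def RPd {X : Type*} [MetricSpace X] (T : X ≃ₜ X) (d : ℕ) (x y : X) : Prop :=
  ∀ δ : ℝ, 0 < δ → ∃ (x' y' : X) (n : Fin d → ℤ),
    dist x x' < δ ∧ dist y y' < δ ∧
    ∀ ε : Finset (Fin d), ε.Nonempty →
      dist (hIter T (∑ i ∈ ε, n i) x') (hIter T (∑ i ∈ ε, n i) y') < δ

/-- `S` is a set of `d`-topological recurrence. -/
def TopRecSet (d : ℕ) (S : Set ℤ) : Prop :=
  ∀ (X : Type) [MetricSpace X] [CompactSpace X] (T : X ≃ₜ X), MinimalTDS T →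
    ∀ U : Set X, IsOpen U → U.Nonempty →
      ∃ n ∈ S, (⋂ j ∈ Finset.range (d + 1), hIter T ((j : ℤ) * n) ⁻¹' U).Nonempty

/-- `S` is a set of `d`-recurrence (measurable recurrence). -/
def MeasRecSet (d : ℕ) (S : Set ℤ) : Prop :=
  ∀ (Y : Type) [MeasurableSpace Y] [StandardBorelSpace Y]
    (μ : Measure Y) [IsProbabilityMeasure μ] (T : Y ≃ᵐ Y),
    MeasurePreserving (⇑T) μ μ →
    ∀ A : Set Y, MeasurableSet A → 0 < μ A →
      ∃ n ∈ S, 0 < μ (⋂ j ∈ Finset.range (d + 1), zIter T.toEquiv ((j : ℤ) * n) ⁻¹' A)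

/-- `P` is a Birkhoff recurrence set of order `d`. -/
def BirkhoffRecSet (d : ℕ) (P : Set ℤ) : Prop :=
  ∀ (X : Type) [MetricSpace X] [CompactSpace X] (T : X ≃ₜ X), MinimalTDS T →
    ∀ U : Set X, IsOpen U → U.Nonempty →
      ∃ n : Fin d → ℤ, FS n ⊆ P ∧ (U ∩ ⋂ m ∈ FS n, hIter T m ⁻¹' U).Nonempty

/-- `F` is a Poincaré recurrence set of order `d`. -/
def PoincareRecSet (d : ℕ) (F : Set ℤ) : Prop :=
  ∀ (Y : Type) [MeasurableSpace Y] [StandardBorelSpace Y]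
    (μ : Measure Y) [IsProbabilityMeasure μ] (T : Y ≃ᵐ Y),
    MeasurePreserving (⇑T) μ μ →
    ∀ A : Set Y, MeasurableSet A → 0 < μ A →
      ∃ n : Fin d → ℤ, FS n ⊆ F ∧ 0 < μ (A ∩ ⋂ m ∈ FS n, zIter T.toEquiv m ⁻¹' A)

/-- The upper unitriangular matrix `M(a)` with entries `(M(a))_{i, i+k} = a i k`
(1-based indexing). -/
def Mmat (d : ℕ) (a : ℕ → ℕ → ℝ) : Matrix (Fin (d + 1)) (Fin (d + 1)) ℝ :=
  fun r c =>
    if (r : ℕ) = (c : ℕ) then 1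
    else if (r : ℕ) < (c : ℕ) then a ((r : ℕ) + 1) ((c : ℕ) - (r : ℕ)) else 0

/-- `P_ℓ(a; i, k) = ∑ a_i^{s₁} a_{i+s₁}^{s₂} ⋯`, sum over `(s₁,…,s_ℓ) ∈ {1,…,k}^ℓ`
with `s₁ + ⋯ + s_ℓ = k`. -/
def Ppoly (a : ℕ → ℕ → ℝ) (i k ℓ : ℕ) : ℝ :=
  ∑ s ∈ Finset.univ.filter (fun s : Fin ℓ → Fin k => (∑ t, ((s t : ℕ) + 1)) = k),
    ∏ t : Fin ℓ,
      a (i + ∑ u ∈ Finset.univ.filter (fun u : Fin ℓ => u < t), ((s u : ℕ) + 1))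
        ((s t : ℕ) + 1)

/-- The upper unitriangular matrix with superdiagonal `α₁, …, α_d` (1-based). -/
def Amat (d : ℕ) (α : ℕ → ℝ) : Matrix (Fin (d + 1)) (Fin (d + 1)) ℝ :=
  fun r c =>
    if (r : ℕ) = (c : ℕ) then 1
    else if (c : ℕ) = (r : ℕ) + 1 then α ((r : ℕ) + 1) else 0

end
noncomputable section Aux
namespace GPAux

/-! ### nearInt facts -/

lemma abs_sub_nearInt_le (x : ℝ) (m : ℤ) : |x - (nearInt x : ℝ)| ≤ |x - (m : ℝ)| := by
  have hfl := Int.floor_le x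
  have hlt := Int.lt_floor_add_one x
  unfold nearInt
  by_cases h : x - (⌊x⌋ : ℝ) ≤ 1/2
  · simp only [if_pos h]
    rcases le_or_gt m ⌊x⌋ with hm | hm
    · have hm' : (m:ℝ) ≤ (⌊x⌋:ℝ) := by exact_mod_cast hm
      rw [abs_of_nonneg (by linarith), abs_of_nonneg (by linarith)]; linarith
    · have hm' : (⌊x⌋:ℝ) + 1 ≤ (m:ℝ) := by exact_mod_cast hm
      have h3 : (m:ℝ) - x ≤ |x - (m:ℝ)| := by
        have := neg_abs_le (x - (m:ℝ)); linarith
      rw [abs_of_nonneg (by linarith)]; linarith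
  · push_neg at h
    have hceil : ⌈x⌉ = ⌊x⌋ + 1 := by
      rw [Int.ceil_eq_iff]
      constructor
      · push_cast; linarith
      · push_cast; linarith
    simp only [if_neg (not_le.mpr h)]
    rw [hceil]
    have hc : |x - ((⌊x⌋ + 1 : ℤ):ℝ)| = (⌊x⌋:ℝ) + 1 - x := by
      rw [abs_of_nonpos (by push_cast; linarith)]; push_cast; ring
    rw [hc]
    rcases le_or_gt m ⌊x⌋ with hm | hm
    · have hm' : (m:ℝ) ≤ (⌊x⌋:ℝ) := by exact_mod_cast hm
      have h3 : x - (m:ℝ) ≤ |x - (m:ℝ)| := le_abs_self _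
      linarith
    · have hm' : (⌊x⌋:ℝ) + 1 ≤ (m:ℝ) := by exact_mod_cast hm
      have h3 : (m:ℝ) - x ≤ |x - (m:ℝ)| := by linarith [neg_le_abs (x - (m:ℝ)), neg_abs_le (x - (m:ℝ))]
      linarith

lemma distInt_le (x : ℝ) (m : ℤ) : distInt x ≤ |x - (m : ℝ)| := abs_sub_nearInt_le x m

lemma distInt_nonneg (x : ℝ) : 0 ≤ distInt x := abs_nonneg _

lemma distInt_eq (x : ℝ) : distInt x = |x - (nearInt x : ℝ)| := rfl

lemma int_eq_of_abs_lt_one {a b : ℤ} (h : |(a:ℝ) - (b:ℝ)| < 1) : a = b := by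
  have h2 : |a - b| < 1 := by
    have : ((|a - b| : ℤ) : ℝ) < 1 := by push_cast; exact h
    exact_mod_cast this
  rw [abs_lt] at h2
  omega

lemma nearInt_eq_of {x : ℝ} {m : ℤ} (h : |x - (m:ℝ)| < 1/2) : nearInt x = m := by
  have h1 : |x - (nearInt x : ℝ)| ≤ |x - m| := abs_sub_nearInt_le x m
  apply int_eq_of_abs_lt_one
  calc |((nearInt x : ℝ)) - (m:ℝ)| ≤ |(nearInt x : ℝ) - x| + |x - m| := abs_sub_le _ _ _
    _ = |x - (nearInt x:ℝ)| + |x - m| := by rw [abs_sub_comm]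
    _ < 1/2 + 1/2 := by linarith
    _ = 1 := by norm_num

/-! ### SGP expressions -/

inductive SE where
  | single (j : ℕ) (c : ℝ)
  | cons (j : ℕ) (c : ℝ) (t : SE)

namespace SE

noncomputable def eval : SE → ℤ → ℝ
  | .single j c, n => (n:ℝ)^j * c
  | .cons j c t, n => (n:ℝ)^j * c * (nearInt (eval t n) : ℝ)

def deg : SE → ℕ
  | .single j _ => j
  | .cons j _ t => j + t.deg

def Good : SE → Prop
  | .single j _ => 1 ≤ j
  | .cons j _ t => 1 ≤ j ∧ t.Good

def len : SE → ℕ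
  | .single _ _ => 1
  | .cons _ _ t => 1 + t.len

@[simp] lemma len_single (j : ℕ) (c : ℝ) : (SE.single j c).len = 1 := rfl
@[simp] lemma len_cons (j : ℕ) (c : ℝ) (t : SE) : (SE.cons j c t).len = 1 + t.len := rfl
@[simp] lemma deg_single (j : ℕ) (c : ℝ) : (SE.single j c).deg = j := rfl
@[simp] lemma deg_cons (j : ℕ) (c : ℝ) (t : SE) : (SE.cons j c t).deg = j + t.deg := rfl

lemma one_le_len (e : SE) : 1 ≤ e.len := by cases e <;> simp [len]

noncomputable def scaleHead (x : ℝ) : SE → SE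
  | .single j c => .single j (x*c)
  | .cons j c t => .cons j (x*c) t

@[simp] lemma eval_scaleHead (x : ℝ) (e : SE) (n : ℤ) :
    (e.scaleHead x).eval n = x * e.eval n := by
  cases e <;> simp [eval, scaleHead] <;> ring

@[simp] lemma deg_scaleHead (x : ℝ) (e : SE) : (e.scaleHead x).deg = e.deg := by
  cases e <;> simp [deg, scaleHead]

@[simp] lemma good_scaleHead (x : ℝ) (e : SE) : (e.scaleHead x).Good ↔ e.Good := by
  cases e <;> simp [Good, scaleHead]

/-- multiply an SE by the monomial `n^j*b`. -/
noncomputable def mulMono (j : ℕ) (b : ℝ) : SE → SE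
  | .single j' c => .single (j+j') (b*c)
  | .cons j' c t => .cons (j+j') (b*c) t

lemma eval_mulMono (j : ℕ) (b : ℝ) (e : SE) (n : ℤ) :
    (e.mulMono j b).eval n = (n:ℝ)^j * b * e.eval n := by
  cases e <;> simp [eval, mulMono, pow_add] <;> ring

lemma deg_mulMono (j : ℕ) (b : ℝ) (e : SE) : (e.mulMono j b).deg = j + e.deg := by
  cases e <;> simp [deg, mulMono] <;> omega

lemma good_mulMono {j : ℕ} (b : ℝ) {e : SE} (hj : 1 ≤ j) (he : e.Good) :
    (e.mulMono j b).Good := by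
  cases e with
  | single j' c => simpa [Good, mulMono] using by omega
  | cons j' c t => exact ⟨by omega, he.2⟩

end SE

/-! ### conditions and integer representations -/

def Holds (C : List (SE × ℝ)) (n : ℤ) : Prop := ∀ p ∈ C, distInt (p.1.eval n) < p.2

def GoodC (d : ℕ) (C : List (SE × ℝ)) : Prop := ∀ p ∈ C, p.1.Good ∧ p.1.deg ≤ d ∧ 0 < p.2

lemma holds_append {C₁ C₂ : List (SE × ℝ)} {n : ℤ} :
    Holds (C₁ ++ C₂) n ↔ Holds C₁ n ∧ Holds C₂ n := by
  simp only [Holds, List.mem_append]; constructor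
  · exact fun h => ⟨fun p hp => h p (Or.inl hp), fun p hp => h p (Or.inr hp)⟩
  · rintro ⟨h₁, h₂⟩ p (hp | hp); exacts [h₁ p hp, h₂ p hp]

lemma goodC_append {d : ℕ} {C₁ C₂ : List (SE × ℝ)} :
    GoodC d (C₁ ++ C₂) ↔ GoodC d C₁ ∧ GoodC d C₂ := by
  simp only [GoodC, List.mem_append]; constructor
  · exact fun h => ⟨fun p hp => h p (Or.inl hp), fun p hp => h p (Or.inr hp)⟩
  · rintro ⟨h₁, h₂⟩ p (hp | hp); exacts [h₁ p hp, h₂ p hp]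

lemma goodC_mono {d d' : ℕ} (h : d ≤ d') {C : List (SE × ℝ)} (hC : GoodC d C) : GoodC d' C :=
  fun p hp => ⟨(hC p hp).1, (hC p hp).2.1.trans h, (hC p hp).2.2⟩

noncomputable def ZRval (R : List (ℤ × SE)) (n : ℤ) : ℤ :=
  (R.map (fun p => p.1 * nearInt (p.2.eval n))).sum

noncomputable def Rrval (R : List (ℤ × SE)) (n : ℤ) : ℝ :=
  (R.map (fun p => (p.1:ℝ) * p.2.eval n)).sum

noncomputable def Rerr (R : List (ℤ × SE)) (n : ℤ) : ℝ :=
  (R.map (fun p => |(p.1:ℝ)| * distInt (p.2.eval n))).sum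

noncomputable def Rwt (R : List (ℤ × SE)) : ℝ := (R.map (fun p => |(p.1:ℝ)|)).sum

def GoodR (D : ℕ) (R : List (ℤ × SE)) : Prop := ∀ p ∈ R, p.2.Good ∧ p.2.deg ≤ D

lemma goodR_mono {D D' : ℕ} (h : D ≤ D') {R : List (ℤ × SE)} (hR : GoodR D R) : GoodR D' R :=
  fun p hp => ⟨(hR p hp).1, (hR p hp).2.trans h⟩

lemma goodR_append {D : ℕ} {R₁ R₂ : List (ℤ × SE)} :
    GoodR D (R₁ ++ R₂) ↔ GoodR D R₁ ∧ GoodR D R₂ := by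
  simp only [GoodR, List.mem_append]; constructor
  · exact fun h => ⟨fun p hp => h p (Or.inl hp), fun p hp => h p (Or.inr hp)⟩
  · rintro ⟨h₁, h₂⟩ p (hp | hp); exacts [h₁ p hp, h₂ p hp]

@[simp] lemma ZRval_nil (n : ℤ) : ZRval [] n = 0 := rfl
@[simp] lemma Rrval_nil (n : ℤ) : Rrval [] n = 0 := rfl
@[simp] lemma Rerr_nil (n : ℤ) : Rerr [] n = 0 := rfl
@[simp] lemma Rwt_nil : Rwt [] = 0 := rfl

@[simp] lemma ZRval_cons (q : ℤ × SE) (R : List (ℤ × SE)) (n : ℤ) :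
    ZRval (q :: R) n = q.1 * nearInt (q.2.eval n) + ZRval R n := by simp [ZRval]
@[simp] lemma Rrval_cons (q : ℤ × SE) (R : List (ℤ × SE)) (n : ℤ) :
    Rrval (q :: R) n = (q.1:ℝ) * q.2.eval n + Rrval R n := by simp [Rrval]
@[simp] lemma Rerr_cons (q : ℤ × SE) (R : List (ℤ × SE)) (n : ℤ) :
    Rerr (q :: R) n = |(q.1:ℝ)| * distInt (q.2.eval n) + Rerr R n := by simp [Rerr]
@[simp] lemma Rwt_cons (q : ℤ × SE) (R : List (ℤ × SE)) :
    Rwt (q :: R) = |(q.1:ℝ)| + Rwt R := by simp [Rwt]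

@[simp] lemma ZRval_append (R₁ R₂ : List (ℤ × SE)) (n : ℤ) :
    ZRval (R₁ ++ R₂) n = ZRval R₁ n + ZRval R₂ n := by simp [ZRval]
@[simp] lemma Rrval_append (R₁ R₂ : List (ℤ × SE)) (n : ℤ) :
    Rrval (R₁ ++ R₂) n = Rrval R₁ n + Rrval R₂ n := by simp [Rrval]
@[simp] lemma Rerr_append (R₁ R₂ : List (ℤ × SE)) (n : ℤ) :
    Rerr (R₁ ++ R₂) n = Rerr R₁ n + Rerr R₂ n := by simp [Rerr]

lemma Rerr_nonneg (R : List (ℤ × SE)) (n : ℤ) : 0 ≤ Rerr R n := by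
  induction R with
  | nil => simp
  | cons q R ih => simp only [Rerr_cons]; have := distInt_nonneg (q.2.eval n); positivity

lemma Rwt_nonneg (R : List (ℤ × SE)) : 0 ≤ Rwt R := by
  induction R with
  | nil => simp
  | cons q R ih => simp only [Rwt_cons]; positivity

lemma abs_ZR_sub_Rr (R : List (ℤ × SE)) (n : ℤ) :
    |((ZRval R n : ℝ)) - Rrval R n| ≤ Rerr R n := by
  induction R with
  | nil => simp
  | cons q R ih =>
    simp only [ZRval_cons, Rrval_cons, Rerr_cons]
    push_cast
    have h1 : |(q.1:ℝ) * (nearInt (q.2.eval n) : ℝ) - (q.1:ℝ) * q.2.eval n|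
        = |(q.1:ℝ)| * distInt (q.2.eval n) := by
      rw [← mul_sub, abs_mul, distInt_eq, abs_sub_comm]
    calc |(q.1:ℝ) * (nearInt (q.2.eval n):ℝ) + (ZRval R n : ℝ) - ((q.1:ℝ) * q.2.eval n + Rrval R n)|
        ≤ |(q.1:ℝ) * (nearInt (q.2.eval n):ℝ) - (q.1:ℝ) * q.2.eval n| + |(ZRval R n : ℝ) - Rrval R n| := by
          have := abs_add_le ((q.1:ℝ) * (nearInt (q.2.eval n):ℝ) - (q.1:ℝ) * q.2.eval n)
            ((ZRval R n : ℝ) - Rrval R n)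
          calc _ = |((q.1:ℝ) * (nearInt (q.2.eval n):ℝ) - (q.1:ℝ) * q.2.eval n) + ((ZRval R n : ℝ) - Rrval R n)| := by ring_nf
            _ ≤ _ := this
      _ ≤ |(q.1:ℝ)| * distInt (q.2.eval n) + Rerr R n := by rw [h1]; exact add_le_add le_rfl ih

/-- conditions that every element of `R` is within `δ` of an integer. -/
def condsOf (R : List (ℤ × SE)) (δ : ℝ) : List (SE × ℝ) := R.map (fun p => (p.2, δ))

lemma goodC_condsOf {d : ℕ} {R : List (ℤ × SE)} {δ : ℝ} (hR : GoodR d R) (hδ : 0 < δ) :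
    GoodC d (condsOf R δ) := by
  intro q hq
  simp only [condsOf, List.mem_map] at hq
  obtain ⟨p, hp, rfl⟩ := hq
  exact ⟨(hR p hp).1, (hR p hp).2, hδ⟩

lemma Rerr_le_of_holds {R : List (ℤ × SE)} {δ : ℝ} {n : ℤ} (hδ : 0 ≤ δ)
    (h : Holds (condsOf R δ) n) : Rerr R n ≤ Rwt R * δ := by
  induction R with
  | nil => simp
  | cons q R ih =>
    have hq : distInt (q.2.eval n) < δ := h (q.2, δ) (by simp [condsOf])
    have hR : Holds (condsOf R δ) n := by
      intro p hp; exact h p (by simp only [condsOf, List.map_cons]; exact List.mem_cons_of_mem _ hp)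
    simp only [Rerr_cons, Rwt_cons, add_mul]
    have := ih hR
    have h1 : |(q.1:ℝ)| * distInt (q.2.eval n) ≤ |(q.1:ℝ)| * δ :=
      mul_le_mul_of_nonneg_left hq.le (abs_nonneg _)
    linarith

def scaleZ (m : ℤ) (R : List (ℤ × SE)) : List (ℤ × SE) := R.map (fun p => (m * p.1, p.2))

@[simp] lemma ZRval_scaleZ (m : ℤ) (R : List (ℤ × SE)) (n : ℤ) :
    ZRval (scaleZ m R) n = m * ZRval R n := by
  induction R with
  | nil => simp [scaleZ]
  | cons q R ih => simp [scaleZ, List.map_cons] at ih ⊢; rw [ih]; ring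

@[simp] lemma Rerr_scaleZ (m : ℤ) (R : List (ℤ × SE)) (n : ℤ) :
    Rerr (scaleZ m R) n = |(m:ℝ)| * Rerr R n := by
  induction R with
  | nil => simp [scaleZ]
  | cons q R ih =>
    simp [scaleZ, List.map_cons] at ih ⊢
    rw [ih]; push_cast [abs_mul]; ring

lemma goodR_scaleZ {D : ℕ} {m : ℤ} {R : List (ℤ × SE)} (hR : GoodR D R) :
    GoodR D (scaleZ m R) := by
  intro p hp
  simp only [scaleZ, List.mem_map] at hp
  obtain ⟨q, hq, rfl⟩ := hp
  exact hR q hq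

def negR (R : List (ℤ × SE)) : List (ℤ × SE) := scaleZ (-1) R

lemma ZRval_negR (R : List (ℤ × SE)) (n : ℤ) : ZRval (negR R) n = - ZRval R n := by
  simp [negR]

lemma Rrval_negR (R : List (ℤ × SE)) (n : ℤ) : Rrval (negR R) n = - Rrval R n := by
  induction R with
  | nil => simp [negR, scaleZ]
  | cons q R ih =>
    simp only [negR, scaleZ, List.map_cons, Rrval_cons] at ih ⊢
    rw [ih]; push_cast; ring

lemma Rerr_negR (R : List (ℤ × SE)) (n : ℤ) : Rerr (negR R) n = Rerr R n := by
  simp [negR]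

/-- mapping `(m, V) ↦ (m, cons j b V)`. -/
noncomputable def consMap (j : ℕ) (b : ℝ) (R : List (ℤ × SE)) : List (ℤ × SE) :=
  R.map (fun p => (p.1, SE.cons j b p.2))

lemma Rrval_consMap (j : ℕ) (b : ℝ) (R : List (ℤ × SE)) (n : ℤ) :
    Rrval (consMap j b R) n = (n:ℝ)^j * b * (ZRval R n : ℝ) := by
  induction R with
  | nil => simp [consMap]
  | cons q R ih =>
    simp only [consMap, List.map_cons, Rrval_cons, ZRval_cons] at ih ⊢
    rw [ih]; simp only [SE.eval]; push_cast; ring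

lemma goodR_consMap {j : ℕ} {b : ℝ} {D D' : ℕ} (hj : 1 ≤ j) {R : List (ℤ × SE)}
    (hR : GoodR D R) (hD : j + D ≤ D') : GoodR D' (consMap j b R) := by
  intro p hp
  simp only [consMap, List.mem_map] at hp
  obtain ⟨q, hq, rfl⟩ := hp
  exact ⟨⟨hj, (hR q hq).1⟩, by simp only [SE.deg]; have := (hR q hq).2; omega⟩

/-! ### the key product lemma -/

lemma A2 (d : ℕ) : ∀ (N : ℕ) (e e' : SE), e.len + e'.len ≤ N → e.Good → e'.Good →
    e.deg + e'.deg ≤ d → ∀ ε : ℝ, 0 < ε →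
    ∃ C R, GoodC d C ∧ GoodR (e.deg + e'.deg) R ∧
      ∀ n, Holds C n →
        (nearInt (e.eval n) * nearInt (e'.eval n) = ZRval R n ∧ Rerr R n < ε) := by
  intro N
  induction N with
  | zero =>
    intro e e' hlen
    exact absurd hlen (by have := e.one_le_len; have := e'.one_le_len; omega)
  | succ N ih =>
    intro e e' hlen hge hge' hdeg ε hε
    -- sub-representation 1 : S⌈S'⌉
    have hrep₁ : ∃ C R, GoodC d C ∧ GoodR (e.deg + e'.deg) R ∧
        ∀ n, Holds C n → e.eval n * (nearInt (e'.eval n) : ℝ) = Rrval R n := by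
      cases e with
      | single j b =>
        refine ⟨[], [(1, SE.cons j b e')], by intro p hp; simp at hp, ?_, ?_⟩
        · intro p hp
          simp only [List.mem_singleton] at hp
          subst hp
          exact ⟨⟨by simpa [SE.Good] using hge, hge'⟩, by simp [SE.deg_cons, SE.deg_single]⟩
        · intro n _
          simp only [Rrval_cons, Rrval_nil, SE.eval]
          ring
      | cons j b T =>
        have hlen' : T.len + e'.len ≤ N := by
          simp only [SE.len_cons] at hlen
          have := e'.one_le_len
          omega
        have hdeg' : T.deg + e'.deg ≤ d := by
          simp only [SE.deg_cons] at hdeg; omega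
        obtain ⟨C₀, R₀, hC₀, hR₀, hm₀⟩ := ih T e' hlen' hge.2 hge' hdeg' 1 one_pos
        refine ⟨C₀, consMap j b R₀, hC₀, ?_, ?_⟩
        · exact goodR_consMap hge.1 hR₀ (by simp [SE.deg_cons, SE.deg_single]; omega)
        · intro n hn
          have h1 := (hm₀ n hn).1
          rw [Rrval_consMap]
          simp only [SE.eval]
          rw [← h1]
          push_cast
          ring
    -- sub-representation 2 : ⌈S⌉S'
    have hrep₂ : ∃ C R, GoodC d C ∧ GoodR (e.deg + e'.deg) R ∧
        ∀ n, Holds C n → (nearInt (e.eval n) : ℝ) * e'.eval n = Rrval R n := by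
      cases e' with
      | single j' b' =>
        refine ⟨[], [(1, SE.cons j' b' e)], by intro p hp; simp at hp, ?_, ?_⟩
        · intro p hp
          simp only [List.mem_singleton] at hp
          subst hp
          exact ⟨⟨by simpa [SE.Good] using hge', hge⟩, by simp [SE.deg_cons, SE.deg_single]; omega⟩
        · intro n _
          simp only [Rrval_cons, Rrval_nil, SE.eval]
          ring
      | cons j' b' T' =>
        have hlen' : e.len + T'.len ≤ N := by
          simp only [SE.len_cons] at hlen; omega
        have hdeg' : e.deg + T'.deg ≤ d := by
          simp only [SE.deg_cons] at hdeg; omega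
        obtain ⟨C₀, R₀, hC₀, hR₀, hm₀⟩ := ih e T' hlen' hge hge'.2 hdeg' 1 one_pos
        refine ⟨C₀, consMap j' b' R₀, hC₀, ?_, ?_⟩
        · exact goodR_consMap hge'.1 hR₀ (by simp [SE.deg_cons, SE.deg_single]; omega)
        · intro n hn
          have h1 := (hm₀ n hn).1
          rw [Rrval_consMap]
          simp only [SE.eval]
          rw [← h1]
          push_cast
          ring
    -- sub-representation 3 : SS'
    have hrep₃ : ∃ C R, GoodC d C ∧ GoodR (e.deg + e'.deg) R ∧
        ∀ n, Holds C n → e.eval n * e'.eval n = Rrval R n := by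
      cases e with
      | single j b =>
        refine ⟨[], [(1, e'.mulMono j b)], by intro p hp; simp at hp, ?_, ?_⟩
        · intro p hp
          simp only [List.mem_singleton] at hp
          subst hp
          refine ⟨SE.good_mulMono b (by simpa [SE.Good] using hge) hge', ?_⟩
          rw [SE.deg_mulMono]
          simp [SE.deg_cons, SE.deg_single]
        · intro n _
          simp only [Rrval_cons, Rrval_nil, SE.eval_mulMono, SE.eval]
          push_cast
          ring
      | cons j b T =>
        cases e' with
        | single j' b' =>
          refine ⟨[], [(1, (SE.cons j b T).mulMono j' b')], by intro p hp; simp at hp, ?_, ?_⟩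
          · intro p hp
            simp only [List.mem_singleton] at hp
            subst hp
            refine ⟨SE.good_mulMono b' (by simpa [SE.Good] using hge') hge, ?_⟩
            rw [SE.deg_mulMono]
            simp [SE.deg_cons, SE.deg_single]; omega
          · intro n _
            simp only [Rrval_cons, Rrval_nil, SE.eval_mulMono]
            push_cast
            simp [SE.eval]
            ring
        | cons j' b' T' =>
          have hlen' : T.len + T'.len ≤ N := by
            simp only [SE.len_cons] at hlen; omega
          have hdeg' : T.deg + T'.deg ≤ d := by
            simp only [SE.deg_cons] at hdeg; omega
          obtain ⟨C₀, R₀, hC₀, hR₀, hm₀⟩ := ih T T' hlen' hge.2 hge'.2 hdeg' 1 one_pos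
          refine ⟨C₀, consMap (j + j') (b * b') R₀, hC₀, ?_, ?_⟩
          · refine goodR_consMap (by have := hge.1; omega) hR₀ ?_
            simp [SE.deg_cons, SE.deg_single]; omega
          · intro n hn
            have h1 := (hm₀ n hn).1
            rw [Rrval_consMap]
            simp only [SE.eval]
            rw [← h1]
            push_cast [pow_add]
            ring
    obtain ⟨C₁, R₁, hC₁, hR₁, hm₁⟩ := hrep₁
    obtain ⟨C₂, R₂, hC₂, hR₂, hm₂⟩ := hrep₂
    obtain ⟨C₃, R₃, hC₃, hR₃, hm₃⟩ := hrep₃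
    set R' : List (ℤ × SE) := R₁ ++ R₂ ++ negR R₃ with hR'def
    have hR' : GoodR (e.deg + e'.deg) R' := by
      rw [hR'def, goodR_append, goodR_append]
      exact ⟨⟨hR₁, hR₂⟩, goodR_scaleZ hR₃⟩
    have hW := Rwt_nonneg R'
    set η := min ε 1 with hηdef
    have hη : 0 < η := lt_min hε one_pos
    set δ₂ := η / (2 * (Rwt R' + 1)) with hδ₂def
    have hδ₂ : 0 < δ₂ := by positivity
    set C : List (SE × ℝ) := C₁ ++ C₂ ++ C₃ ++ [(e, 1/2), (e', 1/2)] ++ condsOf R' δ₂ with hCdef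
    refine ⟨C, R', ?_, hR', ?_⟩
    · rw [hCdef, goodC_append, goodC_append, goodC_append, goodC_append]
      refine ⟨⟨⟨⟨hC₁, hC₂⟩, hC₃⟩, ?_⟩, goodC_condsOf (goodR_mono hdeg hR') hδ₂⟩
      intro p hp
      simp only [List.mem_cons, List.mem_singleton, List.not_mem_nil, or_false] at hp
      rcases hp with rfl | rfl
      · exact ⟨hge, by show e.deg ≤ d; omega, by norm_num⟩
      · exact ⟨hge', by show e'.deg ≤ d; omega, by norm_num⟩
    · intro n hn
      rw [hCdef, holds_append, holds_append, holds_append, holds_append] at hn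
      obtain ⟨⟨⟨⟨hn₁, hn₂⟩, hn₃⟩, hn₄⟩, hn₅⟩ := hn
      have he₁ : distInt (e.eval n) < 1/2 := hn₄ (e, 1/2) (by simp)
      have he₂ : distInt (e'.eval n) < 1/2 := hn₄ (e', 1/2) (by simp)
      have herr : Rerr R' n ≤ Rwt R' * δ₂ := Rerr_le_of_holds hδ₂.le hn₅
      have herr2 : Rwt R' * δ₂ < η / 2 := by
        have h1 : Rwt R' * δ₂ < (Rwt R' + 1) * δ₂ :=
          mul_lt_mul_of_pos_right (lt_add_one _) hδ₂
        have h2 : (Rwt R' + 1) * δ₂ = η / 2 := by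
          rw [hδ₂def]
          field_simp
        linarith
      set x := e.eval n
      set y := e'.eval n
      set X := nearInt x
      set Y := nearInt y
      have key : (X:ℝ) * (Y:ℝ) = Rrval R' n + (x - X) * (y - Y) := by
        have k1 := hm₁ n hn₁
        have k2 := hm₂ n hn₂
        have k3 := hm₃ n hn₃
        rw [hR'def, Rrval_append, Rrval_append]
        have k4 : Rrval (negR R₃) n = - Rrval R₃ n := Rrval_negR R₃ n
        rw [k4, ← k1, ← k2, ← k3]
        ring
      have hgap : |((X * Y : ℤ) : ℝ) - (ZRval R' n : ℝ)| < 1 := by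
        have h1 : |(x - X) * (y - Y)| < 1/2 * (1/2) := by
          rw [abs_mul]
          have d1 : |x - (X:ℝ)| = distInt x := (distInt_eq x).symm
          have d2 : |y - (Y:ℝ)| = distInt y := (distInt_eq y).symm
          rw [d1, d2]
          have := distInt_nonneg x
          have := distInt_nonneg y
          nlinarith
        have h2 : |(Rrval R' n) - (ZRval R' n : ℝ)| ≤ Rerr R' n := by
          rw [abs_sub_comm]; exact abs_ZR_sub_Rr R' n
        have h3 : ((X * Y : ℤ) : ℝ) - (ZRval R' n : ℝ)
            = ((Rrval R' n) - (ZRval R' n : ℝ)) + (x - X) * (y - Y) := by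
          push_cast
          rw [key]
          ring
        rw [h3]
        calc |((Rrval R' n) - (ZRval R' n : ℝ)) + (x - X) * (y - Y)|
            ≤ |(Rrval R' n) - (ZRval R' n : ℝ)| + |(x - X) * (y - Y)| := abs_add_le _ _
          _ < Rerr R' n + 1/2 * (1/2) := by
              have := abs_nonneg ((x - (X:ℝ)) * (y - Y))
              linarith
          _ ≤ Rwt R' * δ₂ + 1/4 := by linarith
          _ < η / 2 + 1/4 := by linarith
          _ ≤ 1 := by
              have : η ≤ 1 := min_le_right _ _
              linarith
      refine ⟨int_eq_of_abs_lt_one hgap, ?_⟩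
      calc Rerr R' n ≤ Rwt R' * δ₂ := herr
        _ < η / 2 := herr2
        _ ≤ ε := by
            have : η ≤ ε := min_le_left _ _
            linarith

/-! ### representations of integer-valued functions, and approximation -/

lemma mul_div_lt {a ε : ℝ} (ha : 0 ≤ a) (hε : 0 < ε) : a * (ε / (a + 1)) < ε := by
  have h1 : a * (ε/(a+1)) < (a+1) * (ε/(a+1)) :=
    mul_lt_mul_of_pos_right (lt_add_one a) (by positivity)
  have h2 : (a+1) * (ε/(a+1)) = ε := by field_simp
  linarith

def Rep (d D : ℕ) (F : ℤ → ℤ) : Prop :=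
  ∀ ε : ℝ, 0 < ε → ∃ C R, GoodC d C ∧ GoodR D R ∧
    ∀ n, Holds C n → (F n = ZRval R n ∧ Rerr R n < ε)

lemma brmul_list (d : ℕ) (e : SE) (he : e.Good) (D : ℕ) (hdeg : e.deg + D ≤ d) :
    ∀ (R₀ : List (ℤ × SE)), GoodR D R₀ → ∀ ε : ℝ, 0 < ε →
    ∃ C R, GoodC d C ∧ GoodR (e.deg + D) R ∧
      ∀ n, Holds C n → (nearInt (e.eval n) * ZRval R₀ n = ZRval R n ∧ Rerr R n < ε) := by
  intro R₀
  induction R₀ with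
  | nil =>
    intro _ ε hε
    exact ⟨[], [], by intro p hp; simp at hp, by intro p hp; simp at hp,
      fun n _ => ⟨by simp, by simpa using hε⟩⟩
  | cons q R₀' ih =>
    intro hGood ε hε
    have hq := hGood q List.mem_cons_self
    have hR₀' : GoodR D R₀' := fun p hp => hGood p (List.mem_cons_of_mem _ hp)
    have hdegq : e.deg + q.2.deg ≤ d := by have := hq.2; omega
    obtain ⟨C₁, R₁, hC₁, hR₁, hm₁⟩ := A2 d (e.len + q.2.len) e q.2 le_rfl he hq.1 hdegq
        ((ε/2) / (|(q.1:ℝ)| + 1)) (by positivity)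
    obtain ⟨C₂, R₂, hC₂, hR₂, hm₂⟩ := ih hR₀' (ε/2) (by positivity)
    refine ⟨C₁ ++ C₂, scaleZ q.1 R₁ ++ R₂, ?_, ?_, ?_⟩
    · rw [goodC_append]; exact ⟨hC₁, hC₂⟩
    · rw [goodR_append]
      exact ⟨goodR_scaleZ (goodR_mono (by have := hq.2; omega) hR₁), hR₂⟩
    · intro n hn
      rw [holds_append] at hn
      have h1 := hm₁ n hn.1
      have h2 := hm₂ n hn.2
      constructor
      · rw [ZRval_cons, ZRval_append, ZRval_scaleZ, ← h1.1, ← h2.1]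
        ring
      · rw [Rerr_append, Rerr_scaleZ]
        have hb : |(q.1:ℝ)| * Rerr R₁ n ≤ |(q.1:ℝ)| * ((ε/2) / (|(q.1:ℝ)| + 1)) :=
          mul_le_mul_of_nonneg_left h1.2.le (abs_nonneg _)
        have hc : |(q.1:ℝ)| * ((ε/2) / (|(q.1:ℝ)| + 1)) < ε/2 :=
          mul_div_lt (abs_nonneg _) (by positivity)
        linarith [h2.2]

lemma repmul_list (d : ℕ) (D₂ : ℕ) (G : ℤ → ℤ) (hG : Rep d D₂ G) :
    ∀ (R₁ : List (ℤ × SE)) (D₁ : ℕ), GoodR D₁ R₁ → D₁ + D₂ ≤ d → ∀ ε : ℝ, 0 < ε →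
    ∃ C R, GoodC d C ∧ GoodR (D₁ + D₂) R ∧
      ∀ n, Holds C n → (ZRval R₁ n * G n = ZRval R n ∧ Rerr R n < ε) := by
  intro R₁
  induction R₁ with
  | nil =>
    intro D₁ _ _ ε hε
    exact ⟨[], [], by intro p hp; simp at hp, by intro p hp; simp at hp,
      fun n _ => ⟨by simp, by simpa using hε⟩⟩
  | cons q R' ih =>
    intro D₁ hGood hd ε hε
    obtain ⟨CG, RG, hCG, hRG, hmG⟩ := hG 1 one_pos
    have hq := hGood q List.mem_cons_self
    have hR' : GoodR D₁ R' := fun p hp => hGood p (List.mem_cons_of_mem _ hp)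
    obtain ⟨C₁, R₁', hC₁, hR₁', hm₁⟩ := brmul_list d q.2 hq.1 D₂
      (by have := hq.2; omega) RG hRG ((ε/2) / (|(q.1:ℝ)| + 1)) (by positivity)
    obtain ⟨C₂, R₂, hC₂, hR₂, hm₂⟩ := ih D₁ hR' hd (ε/2) (by positivity)
    refine ⟨CG ++ C₁ ++ C₂, scaleZ q.1 R₁' ++ R₂, ?_, ?_, ?_⟩
    · rw [goodC_append, goodC_append]; exact ⟨⟨hCG, hC₁⟩, hC₂⟩
    · rw [goodR_append]
      refine ⟨goodR_scaleZ (goodR_mono (by have := hq.2; omega) hR₁'), hR₂⟩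
    · intro n hn
      rw [holds_append, holds_append] at hn
      obtain ⟨⟨hnG, hn₁⟩, hn₂⟩ := hn
      have hG1 := hmG n hnG
      have h1 := hm₁ n hn₁
      have h2 := hm₂ n hn₂
      constructor
      · rw [ZRval_cons, ZRval_append, ZRval_scaleZ, ← h1.1, ← h2.1, hG1.1]
        ring
      · rw [Rerr_append, Rerr_scaleZ]
        have hb : |(q.1:ℝ)| * Rerr R₁' n ≤ |(q.1:ℝ)| * ((ε/2) / (|(q.1:ℝ)| + 1)) :=
          mul_le_mul_of_nonneg_left h1.2.le (abs_nonneg _)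
        have hc : |(q.1:ℝ)| * ((ε/2) / (|(q.1:ℝ)| + 1)) < ε/2 :=
          mul_div_lt (abs_nonneg _) (by positivity)
        linarith [h2.2]

lemma rep_mul {d D₁ D₂ : ℕ} {F G : ℤ → ℤ} (hF : Rep d D₁ F) (hG : Rep d D₂ G)
    (h : D₁ + D₂ ≤ d) : Rep d (D₁ + D₂) (fun n => F n * G n) := by
  intro ε hε
  obtain ⟨CF, RF, hCF, hRF, hmF⟩ := hF 1 one_pos
  obtain ⟨C, R, hC, hR, hm⟩ := repmul_list d D₂ G hG RF D₁ hRF h ε hε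
  refine ⟨CF ++ C, R, by rw [goodC_append]; exact ⟨hCF, hC⟩, hR, ?_⟩
  intro n hn
  rw [holds_append] at hn
  refine ⟨?_, (hm n hn.2).2⟩
  show F n * G n = ZRval R n
  rw [(hmF n hn.1).1, (hm n hn.2).1]

lemma rep_prod (d : ℕ) : ∀ (k : ℕ) (G : Fin (k+1) → ℤ → ℤ) (Dg : Fin (k+1) → ℕ),
    (∀ l, Rep d (Dg l) (G l)) → (∑ l, Dg l) ≤ d →
    Rep d (∑ l, Dg l) (fun n => ∏ l, G l n) := by
  intro k
  induction k with
  | zero =>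
    intro G Dg h _
    have h0 : (∑ l, Dg l) = Dg 0 := by simp [Fin.sum_univ_one]
    have h1 : (fun n => ∏ l, G l n) = G 0 := by
      funext n; simp [Fin.prod_univ_one]
    rw [h0, h1]
    exact h 0
  | succ k ih =>
    intro G Dg h hd
    have hfun : (fun n => ∏ l, G l n) = fun n => G 0 n * ∏ l : Fin (k+1), G l.succ n := by
      funext n; rw [Fin.prod_univ_succ]
    have hsum : (∑ l, Dg l) = Dg 0 + ∑ l : Fin (k+1), Dg l.succ := by rw [Fin.sum_univ_succ]
    have hd' : (∑ l : Fin (k+1), Dg l.succ) ≤ d := by rw [hsum] at hd; omega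
    rw [hfun, hsum]
    exact rep_mul (h 0) (ih (fun l => G l.succ) (fun l => Dg l.succ) (fun l => h l.succ) hd')
      (by rw [hsum] at hd; omega)

/-! ### real approximation by sums of SGP expressions -/

noncomputable def Sval (R : List SE) (n : ℤ) : ℝ := (R.map (fun r => r.eval n)).sum
noncomputable def Dsum (R : List SE) (n : ℤ) : ℝ := (R.map fun r => distInt (r.eval n)).sum
noncomputable def NIsum (R : List SE) (n : ℤ) : ℤ := (R.map fun r => nearInt (r.eval n)).sum

@[simp] lemma Sval_nil (n : ℤ) : Sval [] n = 0 := rfl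
@[simp] lemma Sval_cons (r : SE) (R : List SE) (n : ℤ) :
    Sval (r :: R) n = r.eval n + Sval R n := by simp [Sval]
@[simp] lemma Sval_append (R₁ R₂ : List SE) (n : ℤ) :
    Sval (R₁ ++ R₂) n = Sval R₁ n + Sval R₂ n := by simp [Sval]

def condsOfS (R : List SE) (δ : ℝ) : List (SE × ℝ) := R.map fun r => (r, δ)

lemma goodC_condsOfS {d : ℕ} {R : List SE} (hR : ∀ r ∈ R, r.Good ∧ r.deg ≤ d) {δ : ℝ}
    (hδ : 0 < δ) : GoodC d (condsOfS R δ) := by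
  intro q hq
  simp only [condsOfS, List.mem_map] at hq
  obtain ⟨r, hr, rfl⟩ := hq
  exact ⟨(hR r hr).1, (hR r hr).2, hδ⟩

lemma Dsum_nonneg (R : List SE) (n : ℤ) : 0 ≤ Dsum R n := by
  induction R with
  | nil => simp [Dsum]
  | cons r R ih =>
    simp only [Dsum, List.map_cons, List.sum_cons] at ih ⊢
    have := distInt_nonneg (r.eval n)
    linarith

lemma Dsum_le_of_holds {R : List SE} {δ : ℝ} {n : ℤ} (hδ : 0 ≤ δ)
    (h : Holds (condsOfS R δ) n) : Dsum R n ≤ R.length * δ := by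
  induction R with
  | nil => simp [Dsum]
  | cons r R ih =>
    have hr : distInt (r.eval n) < δ := h (r, δ) (by simp [condsOfS])
    have hR : Holds (condsOfS R δ) n := by
      intro p hp
      exact h p (by simp only [condsOfS, List.map_cons]; exact List.mem_cons_of_mem _ hp)
    simp only [Dsum, List.map_cons, List.sum_cons, List.length_cons] at ih ⊢
    have := ih hR
    push_cast
    linarith

lemma sval_near (R : List SE) (n : ℤ) :
    |Sval R n - (NIsum R n : ℝ)| ≤ Dsum R n := by
  induction R with
  | nil => simp [NIsum, Dsum]
  | cons r R ih =>
    have hni : ((NIsum (r :: R) n : ℤ) : ℝ) = (nearInt (r.eval n) : ℝ) + (NIsum R n : ℝ) := by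
      simp only [NIsum, List.map_cons, List.sum_cons]
      push_cast
      ring
    have hds : Dsum (r :: R) n = distInt (r.eval n) + Dsum R n := by
      simp [Dsum]
    rw [Sval_cons, hni, hds]
    calc |r.eval n + Sval R n - ((nearInt (r.eval n):ℝ) + (NIsum R n : ℝ))|
        = |(r.eval n - (nearInt (r.eval n):ℝ)) + (Sval R n - (NIsum R n:ℝ))| := by congr 1; ring
      _ ≤ |r.eval n - (nearInt (r.eval n):ℝ)| + |Sval R n - (NIsum R n:ℝ)| := abs_add_le _ _
      _ ≤ distInt (r.eval n) + Dsum R n := add_le_add (le_of_eq (distInt_eq _).symm) ih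

lemma ZRval_onemap (R : List SE) (n : ℤ) :
    ZRval (R.map fun r => ((1:ℤ), r)) n = NIsum R n := by
  induction R with
  | nil => simp [NIsum]
  | cons r R ih =>
    simp only [List.map_cons, ZRval_cons, NIsum, List.sum_cons] at ih ⊢
    rw [ih]; simp [NIsum]

lemma Rerr_onemap (R : List SE) (n : ℤ) :
    Rerr (R.map fun r => ((1:ℤ), r)) n = Dsum R n := by
  induction R with
  | nil => simp [Dsum]
  | cons r R ih =>
    simp only [List.map_cons, Rerr_cons, Dsum, List.sum_cons] at ih ⊢
    rw [ih]; simp [Dsum]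

lemma Sval_scaleZmap (c : ℝ) (R : List (ℤ × SE)) (n : ℤ) :
    Sval (R.map fun q => q.2.scaleHead (c * (q.1:ℝ))) n = c * Rrval R n := by
  induction R with
  | nil => simp
  | cons q R ih =>
    simp only [List.map_cons, Sval_cons, Rrval_cons, SE.eval_scaleHead]
    rw [ih]; ring

lemma Sval_consMapZ (j : ℕ) (c : ℝ) (R : List (ℤ × SE)) (n : ℤ) :
    Sval (R.map fun q => SE.cons j (c * (q.1:ℝ)) q.2) n = (n:ℝ)^j * c * (ZRval R n : ℝ) := by
  induction R with
  | nil => simp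
  | cons q R ih =>
    simp only [List.map_cons, Sval_cons, ZRval_cons, SE.eval]
    rw [ih]; push_cast; ring

lemma Sval_smulMap (c : ℝ) (R : List SE) (n : ℤ) :
    Sval (R.map (SE.scaleHead c)) n = c * Sval R n := by
  induction R with
  | nil => simp
  | cons r R ih =>
    simp only [List.map_cons, Sval_cons, SE.eval_scaleHead]
    rw [ih]; ring

def Apx (D : ℕ) (f : ℤ → ℝ) : Prop :=
  ∀ ε : ℝ, 0 < ε → ∃ (C : List (SE × ℝ)) (R : List SE), GoodC D C ∧
    (∀ r ∈ R, r.Good ∧ r.deg ≤ D) ∧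
    ∀ n, Holds C n → |f n - Sval R n| < ε

lemma apx_mono {D D' : ℕ} (h : D ≤ D') {f : ℤ → ℝ} (hf : Apx D f) : Apx D' f := by
  intro ε hε
  obtain ⟨C, R, hC, hR, hm⟩ := hf ε hε
  exact ⟨C, R, goodC_mono h hC, fun r hr => ⟨(hR r hr).1, (hR r hr).2.trans h⟩, hm⟩

lemma rep_of_apx {D : ℕ} {f : ℤ → ℝ} (h : Apx D f) {d : ℕ} (hDd : D ≤ d) :
    Rep d D (fun n => nearInt (f n)) := by
  intro ε hε
  set η := min ε (1/2) with hηdef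
  have hη0 : 0 < η := lt_min hε (by norm_num)
  obtain ⟨C₀, R₀, hC₀, hR₀, hm⟩ := h (η/2) (by positivity)
  set δ := (η/2) / (R₀.length + 1) with hδdef
  have hδ : 0 < δ := by positivity
  refine ⟨C₀ ++ condsOfS R₀ δ, R₀.map (fun r => ((1:ℤ), r)), ?_, ?_, ?_⟩
  · rw [goodC_append]
    exact ⟨goodC_mono hDd hC₀, goodC_mono hDd (goodC_condsOfS hR₀ hδ)⟩
  · intro p hp
    simp only [List.mem_map] at hp
    obtain ⟨r, hr, rfl⟩ := hp
    exact hR₀ r hr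
  · intro n hn
    rw [holds_append] at hn
    have h1 := hm n hn.1
    have h2 : Dsum R₀ n ≤ R₀.length * δ := Dsum_le_of_holds hδ.le hn.2
    have h3 : (R₀.length : ℝ) * δ < η/2 := by
      rw [hδdef]
      exact mul_div_lt (by positivity) (by positivity)
    have h4 := sval_near R₀ n
    have key : |f n - (NIsum R₀ n : ℝ)| < η := by
      calc |f n - (NIsum R₀ n : ℝ)|
          = |(f n - Sval R₀ n) + (Sval R₀ n - (NIsum R₀ n : ℝ))| := by ring_nf
        _ ≤ |f n - Sval R₀ n| + |Sval R₀ n - (NIsum R₀ n : ℝ)| := abs_add_le _ _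
        _ < η/2 + η/2 := by
            have := h1
            have h5 : |Sval R₀ n - (NIsum R₀ n : ℝ)| < η/2 := lt_of_le_of_lt (h4.trans h2) h3
            linarith
        _ = η := by ring
    have hni : nearInt (f n) = NIsum R₀ n :=
      nearInt_eq_of (lt_of_lt_of_le key (min_le_right _ _))
    refine ⟨by show nearInt (f n) = _; rw [hni, ZRval_onemap], ?_⟩
    rw [Rerr_onemap]
    calc Dsum R₀ n ≤ R₀.length * δ := h2
      _ < η/2 := h3
      _ ≤ ε := by
          have h6 : η ≤ ε := min_le_left _ _
          linarith

/-! ### the main induction on generalized polynomials -/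

theorem gp_apx : ∀ {D : ℕ} {f : ℤ → ℝ}, GP D f → Apx D f := by
  intro D f hP
  induction hP with
  | lin a =>
    intro ε hε
    refine ⟨[], [.single 1 a], by intro p hp; simp at hp, ?_, ?_⟩
    · intro r hr
      simp only [List.mem_singleton] at hr
      subst hr
      exact ⟨by simp [SE.Good], by simp⟩
    · intro n _
      show |a * (n:ℝ) - Sval [SE.single 1 a] n| < ε
      have h : Sval [SE.single 1 a] n = (n:ℝ)^1 * a := by simp [SE.eval]
      rw [h]
      have h2 : a * (n:ℝ) - (n:ℝ)^1 * a = 0 := by ring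
      rw [h2]
      simpa using hε
  | add hf hg ihf ihg =>
    rename_i d1 f1 g1
    intro ε hε
    obtain ⟨C₁, R₁, hC₁, hR₁, hm₁⟩ := ihf (ε/2) (by positivity)
    obtain ⟨C₂, R₂, hC₂, hR₂, hm₂⟩ := ihg (ε/2) (by positivity)
    refine ⟨C₁ ++ C₂, R₁ ++ R₂, by rw [goodC_append]; exact ⟨hC₁, hC₂⟩, ?_, ?_⟩
    · intro r hr
      rcases List.mem_append.mp hr with h | h
      exacts [hR₁ r h, hR₂ r h]
    · intro n hn
      rw [holds_append] at hn
      have h1 := hm₁ n hn.1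
      have h2 := hm₂ n hn.2
      rw [Sval_append]
      calc |_ + _ - (Sval R₁ n + Sval R₂ n)|
          = |(f1 n - Sval R₁ n) + (g1 n - Sval R₂ n)| := by congr 1; ring
        _ ≤ _ := abs_add_le _ _
        _ < ε/2 + ε/2 := add_lt_add h1 h2
        _ = ε := by ring
  | smul c hf ih =>
    rename_i d1 g
    intro ε hε
    obtain ⟨C, R, hC, hR, hm⟩ := ih (ε / (|c| + 1)) (by positivity)
    refine ⟨C, R.map (SE.scaleHead c), hC, ?_, ?_⟩
    · intro r hr
      simp only [List.mem_map] at hr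
      obtain ⟨q, hq, rfl⟩ := hr
      exact ⟨(SE.good_scaleHead c q).mpr (hR q hq).1, by rw [SE.deg_scaleHead]; exact (hR q hq).2⟩
    · intro n hn
      have h1 : |g n - Sval R n| < ε / (|c| + 1) := hm n hn
      show |c * g n - Sval (R.map (SE.scaleHead c)) n| < ε
      rw [Sval_smulMap, ← mul_sub, abs_mul]
      calc |c| * |g n - Sval R n| ≤ |c| * (ε / (|c| + 1)) :=
            mul_le_mul_of_nonneg_left h1.le (abs_nonneg c)
        _ < ε := mul_div_lt (abs_nonneg c) hε
  | incl hed hf ih => exact apx_mono (le_of_lt hed) ih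
  | ceil hf ih =>
    rename_i d1 g
    intro ε hε
    obtain ⟨C, R, hC, hR, hm⟩ := rep_of_apx ih le_rfl ε hε
    refine ⟨C, R.map (fun q => q.2.scaleHead ((1:ℝ) * (q.1:ℝ))), hC, ?_, ?_⟩
    · intro r hr
      simp only [List.mem_map] at hr
      obtain ⟨q, hq, rfl⟩ := hr
      exact ⟨(SE.good_scaleHead _ _).mpr (hR q hq).1, by rw [SE.deg_scaleHead]; exact (hR q hq).2⟩
    · intro n hn
      have h1 := hm n hn
      have h1' : nearInt (g n) = ZRval R n := h1.1
      show |(nearInt (g n) : ℝ) - Sval (R.map (fun q => q.2.scaleHead ((1:ℝ) * (q.1:ℝ)))) n| < ε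
      rw [Sval_scaleZmap 1, h1', one_mul]
      exact lt_of_le_of_lt (abs_ZR_sub_Rr R n) h1.2
  | mono hd a₀ p₀ p f hf hsum ih =>
    rename_i d0 k
    intro ε hε
    cases k with
    | zero =>
      have hp₀ : p₀ = d0 := by simpa using hsum
      refine ⟨[], [.single p₀ a₀], by intro q hq; simp at hq, ?_, ?_⟩
      · intro r hr
        simp only [List.mem_singleton] at hr
        subst hr
        exact ⟨by simp [SE.Good]; omega, by simp; omega⟩
      · intro n _
        show |a₀ * (n:ℝ)^p₀ * (∏ l : Fin 0, (nearInt (f l n) : ℝ)) - Sval [SE.single p₀ a₀] n| < ε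
        have h : Sval [SE.single p₀ a₀] n = (n:ℝ)^p₀ * a₀ := by simp [SE.eval]
        have h0 : (∏ l : Fin 0, (nearInt (f l n) : ℝ)) = 1 := by simp
        rw [h, h0]
        have h2 : a₀ * (n:ℝ)^p₀ * 1 - (n:ℝ)^p₀ * a₀ = 0 := by ring
        rw [h2]
        simpa using hε
    | succ k' =>
      have hple : ∀ l : Fin (k'+1), p l ≤ d0 := by
        intro l
        have h1 : p l ≤ ∑ l, p l :=
          Finset.single_le_sum (fun i _ => Nat.zero_le _) (Finset.mem_univ l)
        omega
      have hrep : ∀ l : Fin (k'+1), Rep d0 (p l) (fun n => nearInt (f l n)) :=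
        fun l => rep_of_apx (ih l) (hple l)
      have hsum' : (∑ l, p l) ≤ d0 := by omega
      have hprod := rep_prod d0 k' (fun l n => nearInt (f l n)) p hrep hsum'
      by_cases hp₀ : p₀ = 0
      · subst hp₀
        obtain ⟨C, R, hC, hR, hm⟩ := hprod (ε / (|a₀| + 1)) (by positivity)
        refine ⟨C, R.map (fun q => q.2.scaleHead (a₀ * (q.1:ℝ))), hC, ?_, ?_⟩
        · intro r hr
          simp only [List.mem_map] at hr
          obtain ⟨q, hq, rfl⟩ := hr
          refine ⟨(SE.good_scaleHead _ _).mpr (hR q hq).1, ?_⟩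
          rw [SE.deg_scaleHead]
          exact le_trans (hR q hq).2 (by omega)
        · intro n hn
          have h1 := hm n hn
          have h1' : (∏ l, nearInt (f l n)) = ZRval R n := h1.1
          have hcast : (∏ l, (nearInt (f l n) : ℝ)) = ((∏ l, nearInt (f l n) : ℤ) : ℝ) := by
            push_cast; rfl
          show |a₀ * (n:ℝ)^(0:ℕ) * (∏ l, (nearInt (f l n) : ℝ)) -
            Sval (R.map (fun q => q.2.scaleHead (a₀ * (q.1:ℝ)))) n| < ε
          rw [Sval_scaleZmap a₀, hcast, h1', pow_zero]
          have : |a₀ * 1 * ((ZRval R n : ℤ):ℝ) - a₀ * Rrval R n| = |a₀| * |((ZRval R n:ℤ):ℝ) - Rrval R n| := by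
            rw [← abs_mul]; congr 1; ring
          rw [this]
          calc |a₀| * |((ZRval R n:ℤ):ℝ) - Rrval R n| ≤ |a₀| * Rerr R n :=
                mul_le_mul_of_nonneg_left (abs_ZR_sub_Rr R n) (abs_nonneg _)
            _ ≤ |a₀| * (ε / (|a₀| + 1)) := mul_le_mul_of_nonneg_left h1.2.le (abs_nonneg _)
            _ < ε := mul_div_lt (abs_nonneg _) hε
      · have hp₁ : 1 ≤ p₀ := Nat.one_le_iff_ne_zero.mpr hp₀
        obtain ⟨C, R, hC, hR, hm⟩ := hprod 1 one_pos
        refine ⟨C, R.map (fun q => SE.cons p₀ (a₀ * (q.1:ℝ)) q.2), hC, ?_, ?_⟩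
        · intro r hr
          simp only [List.mem_map] at hr
          obtain ⟨q, hq, rfl⟩ := hr
          refine ⟨⟨hp₁, (hR q hq).1⟩, ?_⟩
          simp only [SE.deg_cons]
          have := (hR q hq).2
          omega
        · intro n hn
          have h1 : (∏ l, nearInt (f l n)) = ZRval R n := (hm n hn).1
          have hcast : (∏ l, (nearInt (f l n) : ℝ)) = ((∏ l, nearInt (f l n) : ℤ) : ℝ) := by
            push_cast; rfl
          show |a₀ * (n:ℝ)^p₀ * (∏ l, (nearInt (f l n) : ℝ)) -
            Sval (R.map (fun q => SE.cons p₀ (a₀ * (q.1:ℝ)) q.2)) n| < ε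
          rw [Sval_consMapZ p₀ a₀, hcast, h1]
          have : a₀ * (n:ℝ)^p₀ * ((ZRval R n:ℤ):ℝ) - (n:ℝ)^p₀ * a₀ * ((ZRval R n:ℤ):ℝ) = 0 := by ring
          rw [this]
          simpa using hε

/-! ### from SE expressions to SGP -/

def SE.toList : SE → List (ℕ × ℝ)
  | .single j c => [(j,c)]
  | .cons j c t => (j,c) :: t.toList

lemma Lfun_cons (x : ℝ) (L : List ℝ) (h : L ≠ []) :
    Lfun (x :: L) = x * (nearInt (Lfun L) : ℝ) := by
  cases L with
  | nil => exact absurd rfl h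
  | cons y r => rfl

lemma toList_ne_nil (e : SE) : e.toList ≠ [] := by
  cases e <;> simp [SE.toList]

lemma eval_eq_Lfun (e : SE) (n : ℤ) :
    e.eval n = Lfun (e.toList.map fun x => (n:ℝ)^x.1 * x.2) := by
  induction e with
  | single j c => rfl
  | cons j c t iht =>
    simp only [SE.toList, List.map_cons]
    rw [Lfun_cons _ _ (by simp [toList_ne_nil])]
    rw [← iht]
    rfl

lemma toList_sum_deg (e : SE) : (e.toList.map Prod.fst).sum = e.deg := by
  induction e with
  | single j c => simp [SE.toList]
  | cons j c t iht => simp [SE.toList, iht]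

lemma toList_good {e : SE} (h : e.Good) : ∀ x ∈ e.toList, 1 ≤ x.1 := by
  induction e with
  | single j c => intro x hx; simp only [SE.toList, List.mem_singleton] at hx; subst hx; exact h
  | cons j c t iht =>
    intro x hx
    simp only [SE.toList, List.mem_cons] at hx
    rcases hx with rfl | hx
    · exact h.1
    · exact iht h.2 x hx

lemma sgp_of_SE {d : ℕ} {e : SE} (hg : e.Good) (hd : e.deg ≤ d) : SGP d e.eval := by
  refine ⟨e.toList.length, ?_, fun t => (e.toList.get t).2, fun t => (e.toList.get t).1,
    ?_, ?_, ?_⟩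
  · have h := toList_ne_nil e
    have := List.length_pos_iff.mpr h
    omega
  · intro t
    exact toList_good hg _ (List.get_mem e.toList t)
  · have h1 : (∑ t, (e.toList.get t).1) = (e.toList.map Prod.fst).sum := by
      conv_rhs => rw [← List.ofFn_get e.toList]
      rw [List.map_ofFn, List.sum_ofFn]
      rfl
    rw [h1, toList_sum_deg]
    exact hd
  · funext n
    have h2 : (List.ofFn fun t => (n:ℝ)^((e.toList.get t).1) * (e.toList.get t).2)
        = e.toList.map (fun x => (n:ℝ)^x.1 * x.2) := by
      conv_rhs => rw [← List.ofFn_get e.toList]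
      rw [List.map_ofFn]
      rfl
    rw [h2, ← eval_eq_Lfun]

/-! ### the per-polynomial condition set -/

lemma final_conds {d : ℕ} {g : ℤ → ℝ} (hA : Apx d g) {ε : ℝ} (hε : 0 < ε) :
    ∃ C : List (SE × ℝ), GoodC d C ∧ ∀ n, Holds C n → distInt (g n) < ε := by
  obtain ⟨C, R, hC, hR, hm⟩ := hA (ε / 2) (by positivity)
  set δ := (ε/2) / (R.length + 1) with hδdef
  have hδ : 0 < δ := by positivity
  refine ⟨C ++ condsOfS R δ, ?_, ?_⟩
  · rw [goodC_append]
    exact ⟨hC, goodC_condsOfS hR hδ⟩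
  · intro n hn
    rw [holds_append] at hn
    have h1 := hm n hn.1
    have h2 : Dsum R n ≤ R.length * δ := Dsum_le_of_holds hδ.le hn.2
    have h3 : (R.length:ℝ) * δ < ε / 2 := by
      rw [hδdef]
      exact mul_div_lt (by positivity) (by positivity)
    have h4 := sval_near R n
    have h5 := distInt_le (g n) (NIsum R n)
    calc distInt (g n) ≤ |g n - (NIsum R n : ℝ)| := h5
      _ = |(g n - Sval R n) + (Sval R n - (NIsum R n:ℝ))| := by congr 1; ring
      _ ≤ |g n - Sval R n| + |Sval R n - (NIsum R n:ℝ)| := abs_add_le _ _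
      _ < ε := by linarith

end GPAux
end Aux

/-- Theorem `F_{GP_d} = F_{SGP_d}`: every basic `F_{GP_d}` set contains a basic
`F_{SGP_d}` set. -/
theorem statement0 (d : ℕ) (hd : 1 ≤ d) (k : ℕ) (P : Fin k → ℤ → ℝ)
    (hP : ∀ i, GP d (P i)) (ε : Fin k → ℝ) (hε : ∀ i, 0 < ε i) :
    ∃ (m : ℕ) (Q : Fin m → ℤ → ℝ) (δ : Fin m → ℝ),
      (∀ j, SGP d (Q j)) ∧ (∀ j, 0 < δ j) ∧
      (⋂ j, {n : ℤ | distInt (Q j n) < δ j}) ⊆ ⋂ i, {n : ℤ | distInt (P i n) < ε i} := by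
  classical
  have hper : ∀ i : Fin k, ∃ C : List (GPAux.SE × ℝ), GPAux.GoodC d C ∧
      ∀ n, GPAux.Holds C n → distInt (P i n) < ε i :=
    fun i => GPAux.final_conds (GPAux.gp_apx (hP i)) (hε i)
  choose C hCgood hCmain using hper
  set Cbig := (List.ofFn C).flatten with hCbigdef
  have hBig : GPAux.GoodC d Cbig := by
    intro q hq
    rw [hCbigdef] at hq
    obtain ⟨L, hL, hqL⟩ := List.mem_flatten.mp hq
    obtain ⟨i, rfl⟩ := List.mem_ofFn.mp hL
    exact hCgood i q hqL
  refine ⟨Cbig.length, fun j => ((Cbig.get j).1).eval, fun j => (Cbig.get j).2, ?_, ?_, ?_⟩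
  · intro j
    have hj := List.get_mem Cbig j
    exact GPAux.sgp_of_SE (hBig _ hj).1 (hBig _ hj).2.1
  · intro j
    exact (hBig _ (List.get_mem Cbig j)).2.2
  · intro n hn
    have hnh : GPAux.Holds Cbig n := by
      intro q hq
      obtain ⟨j, hj⟩ := List.mem_iff_get.mp hq
      have h := Set.mem_iInter.mp hn j
      simp only [Set.mem_setOf_eq] at h
      rw [← hj]
      exact h
    rw [Set.mem_iInter]
    intro i
    have hsub : GPAux.Holds (C i) n := by
      intro q hq
      refine hnh q ?_
      rw [hCbigdef]
      exact List.mem_flatten.mpr ⟨C i, List.mem_ofFn.mpr ⟨i, rfl⟩, hq⟩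
    simp only [Set.mem_setOf_eq]
    exact hCmain i n hsub
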